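/- arXiv:2202.10133 — 4 statements merged into one kernel-verified Lean document; each statement's English description precedes it below -/
import Mathlib

section
/- Let d be a positive integer and let A be a real d×d matrix. The matrix family (exp(tA))_{t ≥ 0} is positive (i.e., every entry of exp(tA) is ≥ 0 for every t ≥ 0) if and only if every off-diagonal entry of A is ≥ 0 (i.e., A j k ≥ 0 for all indices j ≠ k). -/
open NormedSpace Filter Topology Set

lemma pow_entry_nonneg {d : ℕ} {M : Matrix (Fin d) (Fin d) ℝ}
    (hM : ∀ j k, 0 ≤ M j k) (n : ℕ) : ∀ j k, 0 ≤ (M ^ n) j k := by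
  induction n with
  | zero =>
    intro j k
    simp only [pow_zero, Matrix.one_apply]
    split_ifs <;> norm_num
  | succ n ih =>
    intro j k
    rw [pow_succ, Matrix.mul_apply]
    exact Finset.sum_nonneg fun i _ => mul_nonneg (ih j i) (hM i k)

lemma exp_entry_nonneg {d : ℕ} {M : Matrix (Fin d) (Fin d) ℝ}
    (hM : ∀ j k, 0 ≤ M j k) (j k : Fin d) : 0 ≤ exp M j k := by
  letI : SeminormedRing (Matrix (Fin d) (Fin d) ℝ) := Matrix.linftyOpSemiNormedRing
  letI : NormedRing (Matrix (Fin d) (Fin d) ℝ) := Matrix.linftyOpNormedRing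
  letI : NormedAlgebra ℝ (Matrix (Fin d) (Fin d) ℝ) := Matrix.linftyOpNormedAlgebra
  have h : HasSum (fun n : ℕ => ((n.factorial : ℝ))⁻¹ • M ^ n) (exp M) := by
    have h0 := expSeries_hasSum_exp (𝕂 := ℝ) M
    simp only [expSeries_apply_eq] at h0
    exact h0
  have hc : Continuous fun N : Matrix (Fin d) (Fin d) ℝ => N j k :=
    (continuous_apply k).comp (continuous_apply j)
  have h2 : Tendsto (fun s : Finset ℕ => (∑ n ∈ s, ((n.factorial : ℝ))⁻¹ • M ^ n) j k)
      atTop (𝓝 (exp M j k)) := (hc.tendsto _).comp h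
  refine ge_of_tendsto' h2 fun s => ?_
  rw [Matrix.sum_apply]
  refine Finset.sum_nonneg fun n _ => ?_
  rw [Matrix.smul_apply]
  exact mul_nonneg (by positivity) (pow_entry_nonneg hM n j k)

/-- For a real `d × d` matrix `A`, the family `(exp(tA))_{t ≥ 0}` is positive
(all entries of `exp (t • A)` are nonnegative for every `t ≥ 0`) if and only if
every off-diagonal entry of `A` is nonnegative. -/
theorem exp_smul_entries_nonneg_iff_offdiag_nonneg
    (d : ℕ) (hd : 0 < d) (A : Matrix (Fin d) (Fin d) ℝ) :
    (∀ t : ℝ, 0 ≤ t → ∀ j k : Fin d, 0 ≤ exp (t • A) j k) ↔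
      (∀ j k : Fin d, j ≠ k → 0 ≤ A j k) := by
  constructor
  · intro h j k hjk
    letI : SeminormedRing (Matrix (Fin d) (Fin d) ℝ) := Matrix.linftyOpSemiNormedRing
    letI : NormedRing (Matrix (Fin d) (Fin d) ℝ) := Matrix.linftyOpNormedRing
    letI : NormedAlgebra ℝ (Matrix (Fin d) (Fin d) ℝ) := Matrix.linftyOpNormedAlgebra
    have hD : HasDerivAt (fun t : ℝ => exp (t • A)) A 0 := by
      have := hasDerivAt_exp_smul_const (𝕂 := ℝ) A (0 : ℝ)
      rwa [zero_smul, exp_zero, one_mul] at this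
    have hc : Continuous fun N : Matrix (Fin d) (Fin d) ℝ => N j k :=
      (continuous_apply k).comp (continuous_apply j)
    let L : Matrix (Fin d) (Fin d) ℝ →L[ℝ] ℝ :=
      { Matrix.entryLinearMap ℝ ℝ j k with cont := hc }
    have hE : HasDerivAt (fun t : ℝ => exp (t • A) j k) (A j k) 0 :=
      (L.hasFDerivAt.comp_hasDerivAt 0 hD :)
    have hW : HasDerivWithinAt (fun t : ℝ => exp (t • A) j k) (A j k) (Ici 0) 0 :=
      hE.hasDerivWithinAt
    rw [hasDerivWithinAt_iff_tendsto_slope, Ici_sdiff_left] at hW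
    refine ge_of_tendsto hW ?_
    filter_upwards [self_mem_nhdsWithin] with t (ht : t ∈ Ioi 0)
    have h0 : exp ((0 : ℝ) • A) j k = 0 := by
      rw [zero_smul, exp_zero, Matrix.one_apply_ne hjk]
    rw [slope_def_field, h0, sub_zero, sub_zero]
    exact div_nonneg (h t ht.le j k) ht.le
  · intro hoff t ht j k
    set c : ℝ := ∑ i, |A i i| with hc
    have hcn : ∀ i : Fin d, |A i i| ≤ c := fun i =>
      Finset.single_le_sum (fun i _ => abs_nonneg (A i i)) (Finset.mem_univ i)
    have hB : ∀ j k, 0 ≤ (A + c • (1 : Matrix (Fin d) (Fin d) ℝ)) j k := by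
      intro j k
      simp only [Matrix.add_apply, Matrix.smul_apply, Matrix.one_apply, smul_eq_mul]
      rcases eq_or_ne j k with rfl | hjk
      · rw [if_pos rfl, mul_one]
        have := hcn j
        have := neg_abs_le (A j j)
        linarith
      · simp only [if_neg hjk, mul_zero, add_zero]
        exact hoff j k hjk
    have hsplit : t • A = t • (A + c • (1 : Matrix (Fin d) (Fin d) ℝ))
        + (-(t * c)) • (1 : Matrix (Fin d) (Fin d) ℝ) := by
      rw [smul_add, smul_smul]
      module
    have hcomm : Commute (t • (A + c • (1 : Matrix (Fin d) (Fin d) ℝ)))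
        ((-(t * c)) • (1 : Matrix (Fin d) (Fin d) ℝ)) :=
      (Commute.one_right _).smul_right _
    have hmul : exp (t • A) = exp (t • (A + c • (1 : Matrix (Fin d) (Fin d) ℝ)))
        * exp ((-(t * c)) • (1 : Matrix (Fin d) (Fin d) ℝ)) := by
      rw [hsplit, Matrix.exp_add_of_commute _ _ hcomm]
    have hdiag : exp ((-(t * c)) • (1 : Matrix (Fin d) (Fin d) ℝ))
        = Matrix.diagonal (fun _ => Real.exp (-(t * c))) := by
      have h1 : (-(t * c)) • (1 : Matrix (Fin d) (Fin d) ℝ)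
          = Matrix.diagonal (fun _ : Fin d => -(t * c)) := by
        funext a b
        rw [Matrix.smul_apply, Matrix.one_apply, Matrix.diagonal_apply]
        split_ifs <;> simp
      rw [h1, Matrix.exp_diagonal]
      have he : (exp fun _ : Fin d => -(t * c)) = fun _ : Fin d => Real.exp (-(t * c)) :=
        funext fun i => (Pi.coe_exp _ i).trans (congrFun Real.exp_eq_exp_ℝ _).symm
      rw [he]
    rw [hmul, Matrix.mul_apply]
    refine Finset.sum_nonneg fun i _ => mul_nonneg ?_ ?_
    · exact exp_entry_nonneg (fun a b => smul_nonneg ht (hB a b)) j i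
    · rw [hdiag]
      by_cases hik : i = k
      · subst hik; rw [Matrix.diagonal_apply_eq]; exact (Real.exp_pos _).le
      · rw [Matrix.diagonal_apply_ne _ hik]
end

section
/- Let v₁ = (1/√3)·(1,1,1), v₂ = (1/√2)·(−1,0,1), v₃ = (1/√6)·(1,−2,1) in ℝ³, let V be the 3×3 matrix with columns v₁, v₂, v₃, let R be the 3×3 matrix with rows (0,0,0), (0,−1,−1), (0,1,−1), and let A = V R Vᵀ. Then exp(tA) converges, as t → ∞, to the 3×3 matrix all of whose entries equal 1/3 (i.e., to v₁·v₁ᵀ). -/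
open NormedSpace Filter Matrix

noncomputable def exVecV : Matrix (Fin 3) (Fin 3) ℝ :=
  !![1 / Real.sqrt 3, -1 / Real.sqrt 2,  1 / Real.sqrt 6;
     1 / Real.sqrt 3,  0,               -2 / Real.sqrt 6;
     1 / Real.sqrt 3,  1 / Real.sqrt 2,  1 / Real.sqrt 6]

def exMatR : Matrix (Fin 3) (Fin 3) ℝ :=
  !![0,  0,  0;
     0, -1, -1;
     0,  1, -1]

/-! ### Auxiliary definitions -/

def exMatD : Matrix (Fin 3) (Fin 3) ℝ := !![0, 0, 0; 0, -1, 0; 0, 0, -1]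

def exMatS : Matrix (Fin 3) (Fin 3) ℝ := !![0, 0, 0; 0, 0, -1; 0, 1, 0]

def exMatE : Matrix (Fin 3) (Fin 3) ℝ := !![1, 0, 0; 0, 0, 0; 0, 0, 0]

def exMatE' : Matrix (Fin 3) (Fin 3) ℝ := !![0, 0, 0; 0, 1, 0; 0, 0, 1]

/-- If `A * B = 0` then `A * exp B = A`. -/
lemma exMul_exp_of_mul_eq_zero (A B : Matrix (Fin 3) (Fin 3) ℝ) (h : A * B = 0) :
    A * exp B = A := by
  letI : SeminormedRing (Matrix (Fin 3) (Fin 3) ℝ) := Matrix.linftyOpSemiNormedRing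
  letI : NormedRing (Matrix (Fin 3) (Fin 3) ℝ) := Matrix.linftyOpNormedRing
  letI : NormedAlgebra ℝ (Matrix (Fin 3) (Fin 3) ℝ) := Matrix.linftyOpNormedAlgebra
  erw [congrFun (exp_eq_tsum ℝ) B, ← (expSeries_summable' (𝕂 := ℝ) B).tsum_mul_left A]
  rw [tsum_eq_single 0]
  · simp
  · intro n hn
    obtain ⟨m, rfl⟩ := Nat.exists_eq_succ_of_ne_zero hn
    rw [pow_succ', mul_smul_comm, ← mul_assoc, h, zero_mul, smul_zero]

lemma exVecV_transpose : exVecVᵀ =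
    !![1 / Real.sqrt 3, 1 / Real.sqrt 3, 1 / Real.sqrt 3;
       -1 / Real.sqrt 2, 0, 1 / Real.sqrt 2;
       1 / Real.sqrt 6, -2 / Real.sqrt 6, 1 / Real.sqrt 6] := by
  ext i j; fin_cases i <;> fin_cases j <;> rfl

lemma exVecV_mul_transpose : exVecV * exVecVᵀ = 1 := by
  have s2 : Real.sqrt 2 * Real.sqrt 2 = 2 := Real.mul_self_sqrt (by norm_num)
  have s3 : Real.sqrt 3 * Real.sqrt 3 = 3 := Real.mul_self_sqrt (by norm_num)
  have s6 : Real.sqrt 6 * Real.sqrt 6 = 6 := Real.mul_self_sqrt (by norm_num)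
  have s23 : Real.sqrt 2 * Real.sqrt 3 = Real.sqrt 6 := by
    rw [← Real.sqrt_mul (by norm_num)]; norm_num
  have h2 : Real.sqrt 2 ≠ 0 := by positivity
  have h3 : Real.sqrt 3 ≠ 0 := by positivity
  have h6 : Real.sqrt 6 ≠ 0 := by positivity
  rw [exVecV_transpose]
  ext i j
  fin_cases i <;> fin_cases j <;>
    simp [exVecV, Matrix.mul_apply, Fin.sum_univ_three, Matrix.one_apply,
      Matrix.vecHead, Matrix.vecTail] <;>
    field_simp <;> norm_num [Real.sq_sqrt] <;> nlinarith [s2, s3, s6, s23]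

lemma exVecV_mul_exMatE : exVecV * exMatE =
    !![1 / Real.sqrt 3, 0, 0; 1 / Real.sqrt 3, 0, 0; 1 / Real.sqrt 3, 0, 0] := by
  ext i j
  fin_cases i <;> fin_cases j <;>
    simp [exVecV, exMatE, Matrix.mul_apply, Fin.sum_univ_three]

lemma exVecV_mul_E_mul_transpose :
    exVecV * exMatE * exVecVᵀ = Matrix.of fun _ _ : Fin 3 => (1 / 3 : ℝ) := by
  have s3 : Real.sqrt 3 * Real.sqrt 3 = 3 := Real.mul_self_sqrt (by norm_num)
  have h3 : Real.sqrt 3 ≠ 0 := by positivity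
  rw [exVecV_transpose, exVecV_mul_exMatE]
  ext i j
  fin_cases i <;> fin_cases j <;>
    simp [Matrix.mul_apply, Fin.sum_univ_three, Matrix.vecHead, Matrix.vecTail] <;>
    field_simp <;> nlinarith [s3]

/-- `exp (t • exMatD) = exMatE + exp (-t) • exMatE'`. -/
lemma exp_smul_exMatD (t : ℝ) :
    exp (t • exMatD) = exMatE + Real.exp (-t) • exMatE' := by
  have hd : t • exMatD = Matrix.diagonal ![0, -t, -t] := by
    ext i j
    fin_cases i <;> fin_cases j <;>
      simp [exMatD, Matrix.diagonal, Matrix.vecHead, Matrix.vecTail] <;> ring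
  rw [hd, Matrix.exp_diagonal, Pi.exp_def]
  ext i j
  fin_cases i <;> fin_cases j <;>
    simp [Matrix.diagonal, exMatE, exMatE', exp_zero, ← Real.exp_eq_exp_ℝ,
      Matrix.vecHead, Matrix.vecTail]

/-- For `A = V R Vᵀ` with `V` the orthogonal matrix with columns
`v₁ = (1/√3)(1,1,1)`, `v₂ = (1/√2)(-1,0,1)`, `v₃ = (1/√6)(1,-2,1)` and
`R = !![0,0,0; 0,-1,-1; 0,1,-1]`, the matrix `exp (t • A)` converges, as `t → ∞`,
to the matrix all of whose entries equal `1/3` (that is, to `v₁ v₁ᵀ`). -/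
theorem exp_smul_tendsto_third_matrix :
    Tendsto (fun t : ℝ => exp (t • (exVecV * exMatR * exVecVᵀ)))
      atTop (nhds (Matrix.of fun _ _ : Fin 3 => (1 / 3 : ℝ))) := by
  have hVVt := exVecV_mul_transpose
  have hU : IsUnit exVecV :=
    ⟨⟨exVecV, exVecVᵀ, hVVt, mul_eq_one_comm.mp hVVt⟩, rfl⟩
  have hVinv : exVecV⁻¹ = exVecVᵀ := Matrix.inv_eq_right_inv hVVt
  -- the rotation factor
  set M : ℝ → Matrix (Fin 3) (Fin 3) ℝ := fun t => exp (t • exMatS) with hM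
  -- Key equality
  have key : ∀ t : ℝ, exp (t • (exVecV * exMatR * exVecVᵀ)) =
      (Matrix.of fun _ _ : Fin 3 => (1 / 3 : ℝ)) +
        Real.exp (-t) • (exVecV * (exMatE' * M t) * exVecVᵀ) := by
    intro t
    have hA : t • (exVecV * exMatR * exVecVᵀ) = exVecV * (t • exMatR) * exVecVᵀ := by
      rw [mul_smul_comm, smul_mul_assoc]
    have hc : Commute (t • exMatD) (t • exMatS) := by
      have : Commute exMatD exMatS := by
        unfold Commute SemiconjBy
        ext i j
        fin_cases i <;> fin_cases j <;>
          simp [exMatD, exMatS, Matrix.mul_apply, Fin.sum_univ_three]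
      exact (this.smul_left t).smul_right t
    have hsplit : t • exMatR = t • exMatD + t • exMatS := by
      rw [← smul_add]
      congr 1
      ext i j
      fin_cases i <;> fin_cases j <;> norm_num [exMatR, exMatD, exMatS]
    have hES : exMatE * (t • exMatS) = 0 := by
      rw [mul_smul_comm]
      have : exMatE * exMatS = 0 := by
        ext i j
        fin_cases i <;> fin_cases j <;>
          simp [exMatE, exMatS, Matrix.mul_apply, Fin.sum_univ_three]
      rw [this, smul_zero]
    rw [hA, ← hVinv, Matrix.exp_conj _ _ hU, hVinv, hsplit,
      Matrix.exp_add_of_commute _ _ hc, exp_smul_exMatD, add_mul,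
      exMul_exp_of_mul_eq_zero _ _ hES, smul_mul_assoc, mul_add, add_mul,
      exVecV_mul_E_mul_transpose, mul_smul_comm, smul_mul_assoc]
  -- entrywise bounds on `M t`
  have hMb : ∀ t (i j : Fin 3), |M t i j| ≤ 1 := by
    intro t i j
    have hskew : (t • exMatS)ᵀ = -(t • exMatS) := by
      ext i j
      fin_cases i <;> fin_cases j <;> norm_num [exMatS]
    have horth : (M t)ᵀ * M t = 1 := by
      rw [hM, ← Matrix.exp_transpose, hskew,
        ← Matrix.exp_add_of_commute _ _ (Commute.refl (t • exMatS)).neg_left,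
        neg_add_cancel, exp_zero]
    have hsum := congrFun (congrFun horth j) j
    rw [Matrix.mul_apply, Matrix.one_apply_eq] at hsum
    have hsq : M t i j * M t i j ≤ 1 := by
      rw [← hsum]
      have hnn : ∀ k : Fin 3, (0:ℝ) ≤ (M t)ᵀ j k * M t k j := by
        intro k; rw [Matrix.transpose_apply]; exact mul_self_nonneg _
      have h := Finset.single_le_sum (f := fun k => (M t)ᵀ j k * M t k j)
        (fun k _ => hnn k) (Finset.mem_univ i)
      simpa [Matrix.transpose_apply] using h
    rw [abs_le]; constructor <;> nlinarith
  -- bound on entry of triple product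
  have bmul : ∀ (X Y : Matrix (Fin 3) (Fin 3) ℝ) (a b : ℝ), 0 ≤ a → 0 ≤ b →
      (∀ i j, |X i j| ≤ a) → (∀ i j, |Y i j| ≤ b) →
      ∀ i j, |(X * Y) i j| ≤ 3 * (a * b) := by
    intro X Y a b ha hb hX hY i j
    have h : ∀ k : Fin 3, |X i k * Y k j| ≤ a * b := fun k => by
      rw [abs_mul]; exact mul_le_mul (hX i k) (hY k j) (abs_nonneg _) ha
    rw [Matrix.mul_apply, Fin.sum_univ_three]
    calc |X i 0 * Y 0 j + X i 1 * Y 1 j + X i 2 * Y 2 j|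
        ≤ |X i 0 * Y 0 j| + |X i 1 * Y 1 j| + |X i 2 * Y 2 j| := abs_add_three _ _ _
      _ ≤ 3 * (a * b) := by have := h 0; have := h 1; have := h 2; linarith
  -- entries of V, Vᵀ, E' bounded by 1
  have one_le_s2 : (1:ℝ) ≤ Real.sqrt 2 := (Real.le_sqrt (by norm_num) (by norm_num)).2 (by norm_num)
  have one_le_s3 : (1:ℝ) ≤ Real.sqrt 3 := (Real.le_sqrt (by norm_num) (by norm_num)).2 (by norm_num)
  have two_le_s6 : (2:ℝ) ≤ Real.sqrt 6 := (Real.le_sqrt (by norm_num) (by norm_num)).2 (by norm_num)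
  have e2 : |(-1 : ℝ) / Real.sqrt 2| ≤ 1 := by
    rw [abs_div, abs_neg, abs_one, abs_of_nonneg (Real.sqrt_nonneg _),
      div_le_one (by linarith)]
    linarith
  have e2' : |(1 : ℝ) / Real.sqrt 2| ≤ 1 := by
    rw [abs_div, abs_one, abs_of_nonneg (Real.sqrt_nonneg _), div_le_one (by linarith)]
    linarith
  have e3 : |(1 : ℝ) / Real.sqrt 3| ≤ 1 := by
    rw [abs_div, abs_one, abs_of_nonneg (Real.sqrt_nonneg _), div_le_one (by linarith)]
    linarith
  have e6 : |(1 : ℝ) / Real.sqrt 6| ≤ 1 := by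
    rw [abs_div, abs_one, abs_of_nonneg (Real.sqrt_nonneg _), div_le_one (by linarith)]
    linarith
  have e6' : |(-2 : ℝ) / Real.sqrt 6| ≤ 1 := by
    rw [abs_div, abs_of_nonneg (Real.sqrt_nonneg _), div_le_one (by linarith)]
    rw [show |(-2:ℝ)| = 2 by norm_num]
    linarith
  have e0 : |(0 : ℝ)| ≤ 1 := by norm_num
  have hVb : ∀ i j, |exVecV i j| ≤ 1 := by
    intro i j
    fin_cases i <;> fin_cases j <;>
      first | exact e3 | exact e2 | exact e2' | exact e6 | exact e6' | exact e0
  have hVtb : ∀ i j, |exVecVᵀ i j| ≤ 1 := fun i j => hVb j i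
  have hE'b : ∀ i j, |exMatE' i j| ≤ (1:ℝ) := by
    intro i j
    fin_cases i <;> fin_cases j <;> norm_num [exMatE']
  -- the bounded remainder
  have hNb : ∀ t (i j : Fin 3), |(exVecV * (exMatE' * M t) * exVecVᵀ) i j| ≤ 27 := by
    intro t i j
    have h1 : ∀ i j, |(exMatE' * M t) i j| ≤ 3 * (1 * 1) :=
      bmul _ _ _ _ zero_le_one zero_le_one hE'b (hMb t)
    have h2 : ∀ i j, |(exVecV * (exMatE' * M t)) i j| ≤ 3 * (1 * (3 * (1 * 1))) :=
      bmul _ _ _ _ zero_le_one (by norm_num) hVb h1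
    have h3 := bmul _ _ _ _ (by norm_num : (0:ℝ) ≤ 3 * (1 * (3 * (1 * 1)))) zero_le_one h2 hVtb i j
    calc |(exVecV * (exMatE' * M t) * exVecVᵀ) i j|
        ≤ 3 * (3 * (1 * (3 * (1 * 1))) * 1) := h3
      _ ≤ 27 := by norm_num
  -- conclude entrywise
  refine tendsto_pi_nhds.2 ?_
  intro i
  rw [tendsto_pi_nhds]
  intro j
  simp only [key, Matrix.add_apply, Matrix.smul_apply, smul_eq_mul]
  have hz : Tendsto (fun t : ℝ =>
      Real.exp (-t) * (exVecV * (exMatE' * M t) * exVecVᵀ) i j) atTop (nhds 0) := by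
    apply squeeze_zero_norm (a := fun t => 27 * Real.exp (-t))
    · intro t
      rw [Real.norm_eq_abs, abs_mul, abs_of_nonneg (Real.exp_pos _).le, mul_comm]
      exact mul_le_mul_of_nonneg_right (hNb t i j) (Real.exp_pos _).le
    · simpa using Real.tendsto_exp_neg_atTop_nhds_zero.const_mul 27
  simpa using tendsto_const_nhds.add hz
end

section
/- Let v₁ = (1/√3)·(1,1,1), v₂ = (1/√2)·(−1,0,1), v₃ = (1/√6)·(1,−2,1) in ℝ³, let V be the 3×3 matrix with columns v₁, v₂, v₃, let R be the 3×3 matrix with rows (0,0,0), (0,−1,−1), (0,1,−1), and let A = V R Vᵀ. Then there exists t₀ ≥ 0 such that for all t ≥ t₀ every entry of exp(tA) is strictly positive. -/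
open NormedSpace Filter Matrix

/-- The real-algebra homomorphism `ℝ × ℂ → M₃(ℝ)` sending `(a, z)` to the block
diagonal matrix with blocks `a` and the `2×2` matrix of multiplication by `z`. -/
noncomputable def exPsi : (ℝ × ℂ) →ₐ[ℝ] Matrix (Fin 3) (Fin 3) ℝ where
  toFun p := !![p.1, 0, 0; 0, p.2.re, -p.2.im; 0, p.2.im, p.2.re]
  map_one' := by
    ext i j
    fin_cases i <;> fin_cases j <;> simp [Matrix.one_apply, Matrix.vecHead, Matrix.vecTail]
  map_mul' p q := by
    ext i j
    fin_cases i <;> fin_cases j <;>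
      simp [Matrix.mul_apply, Fin.sum_univ_three, Complex.mul_re, Complex.mul_im,
        Matrix.vecHead, Matrix.vecTail] <;> ring
  map_zero' := by
    ext i j
    fin_cases i <;> fin_cases j <;> simp [Matrix.vecHead, Matrix.vecTail]
  map_add' p q := by
    ext i j
    fin_cases i <;> fin_cases j <;> simp [Matrix.vecHead, Matrix.vecTail] <;> ring
  commutes' r := by
    ext i j
    fin_cases i <;> fin_cases j <;>
      simp [Matrix.algebraMap_matrix_apply, Matrix.vecHead, Matrix.vecTail]

lemma exPsi_cont : Continuous exPsi := by
  apply continuous_matrix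
  intro i j
  fin_cases i <;> fin_cases j <;> simp [exPsi] <;> fun_prop

lemma smul_exMatR_eq (t : ℝ) : t • exMatR = exPsi (0, t * (-1 + Complex.I)) := by
  ext i j
  fin_cases i <;> fin_cases j <;>
    simp [exPsi, exMatR, Matrix.vecHead, Matrix.vecTail] <;> ring

lemma exp_prod_eq (x : ℝ × ℂ) : exp x = (Real.exp x.1, Complex.exp x.2) := by
  ext
  · rw [Prod.fst_exp, Real.exp_eq_exp_ℝ]
  · rw [Prod.snd_exp, Complex.exp_eq_exp_ℂ]

lemma exp_smul_exMatR (t : ℝ) :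
    exp (t • exMatR) =
      !![1, 0, 0;
         0, Real.exp (-t) * Real.cos t, -(Real.exp (-t) * Real.sin t);
         0, Real.exp (-t) * Real.sin t, Real.exp (-t) * Real.cos t] := by
  letI : SeminormedRing (Matrix (Fin 3) (Fin 3) ℝ) := Matrix.linftyOpSemiNormedRing
  letI : NormedRing (Matrix (Fin 3) (Fin 3) ℝ) := Matrix.linftyOpNormedRing
  letI : NormedAlgebra ℝ (Matrix (Fin 3) (Fin 3) ℝ) := Matrix.linftyOpNormedAlgebra
  rw [smul_exMatR_eq]
  erw [← map_exp exPsi exPsi_cont]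
  rw [exp_prod_eq]
  have hre : (t * (-1 + Complex.I)).re = -t := by simp
  have him : (t * (-1 + Complex.I)).im = t := by simp
  show (!![Real.exp 0, 0, 0; 0, _, _; 0, _, _] : Matrix (Fin 3) (Fin 3) ℝ) = _
  rw [Complex.exp_re, Complex.exp_im, hre, him, Real.exp_zero]

set_option maxHeartbeats 1000000 in
lemma exVecV_entry_pos (c s : ℝ) (hc1 : -(1/6) ≤ c) (hc2 : c ≤ 1/6)
    (hs1 : -(1/6) ≤ s) (hs2 : s ≤ 1/6) :
    ∀ j k, 0 < (exVecV * !![1,0,0;0,c,-s;0,s,c] * exVecVᵀ) j k := by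
  have p2 : (0:ℝ) < Real.sqrt 2 := by positivity
  have p3 : (0:ℝ) < Real.sqrt 3 := by positivity
  have h62 : Real.sqrt 6 = Real.sqrt 2 * Real.sqrt 3 := by
    rw [← Real.sqrt_mul (by norm_num : (0:ℝ) ≤ 2)]; norm_num
  have i2 : (Real.sqrt 2)⁻¹ ^ 2 = 1/2 := by
    rw [← Real.sqrt_inv, Real.sq_sqrt (by norm_num)]; norm_num
  have i3 : (Real.sqrt 3)⁻¹ ^ 2 = 1/3 := by
    rw [← Real.sqrt_inv, Real.sq_sqrt (by norm_num)]; norm_num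
  have ib : (Real.sqrt 3)⁻¹ ≤ 3/5 := by
    rw [inv_le_comm₀ p3 (by norm_num)]
    nlinarith [Real.sq_sqrt (by norm_num : (0:ℝ) ≤ 3)]
  have ip : (0:ℝ) < (Real.sqrt 3)⁻¹ := by positivity
  intro j k
  fin_cases j <;> fin_cases k <;>
    simp [exVecV, Matrix.mul_apply, Fin.sum_univ_three, Matrix.vecHead, Matrix.vecTail,
      div_eq_mul_inv, h62, mul_inv] <;>
    ring_nf <;>
    simp only [i2, i3] <;>
    nlinarith [ib, ip, hc1, hc2, hs1, hs2]

/-- For `A = V R Vᵀ` with `V` the orthogonal matrix with columns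
`v₁ = (1/√3)(1,1,1)`, `v₂ = (1/√2)(-1,0,1)`, `v₃ = (1/√6)(1,-2,1)` and
`R = !![0,0,0; 0,-1,-1; 0,1,-1]`, there exists `t₀ ≥ 0` such that for all `t ≥ t₀`
every entry of `exp (t • A)` is strictly positive. -/
theorem exp_smul_eventually_entries_pos :
    ∃ t₀ : ℝ, 0 ≤ t₀ ∧ ∀ t : ℝ, t₀ ≤ t →
      ∀ j k : Fin 3, 0 < exp (t • (exVecV * exMatR * exVecVᵀ)) j k := by
  refine ⟨2, by norm_num, ?_⟩
  intro t ht j k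
  have hU : IsUnit exVecV := by
    rw [Matrix.isUnit_iff_isUnit_det]
    have hdet : exVecV.det * exVecVᵀ.det = 1 := by
      rw [← Matrix.det_mul, exVecV_mul_transpose, Matrix.det_one]
    exact IsUnit.of_mul_eq_one _ hdet
  have hinv : exVecV⁻¹ = exVecVᵀ := inv_eq_right_inv exVecV_mul_transpose
  have hsm : t • (exVecV * exMatR * exVecVᵀ) = exVecV * (t • exMatR) * exVecV⁻¹ := by
    rw [hinv, Matrix.mul_smul, Matrix.smul_mul]
  rw [hsm, Matrix.exp_conj _ _ hU, hinv, exp_smul_exMatR]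
  -- bounds on the oscillating coefficients
  have hexp : Real.exp 2 = Real.exp 1 * Real.exp 1 := by
    rw [← Real.exp_add]; norm_num
  have h6e : (6:ℝ) < Real.exp 2 := by nlinarith [Real.exp_one_gt_d9]
  have hle : Real.exp (-t) ≤ Real.exp (-2) := Real.exp_le_exp.mpr (by linarith)
  have h16 : Real.exp (-2) ≤ 1/6 := by
    rw [Real.exp_neg, inv_le_comm₀ (Real.exp_pos 2) (by norm_num)]
    rw [show ((1:ℝ)/6)⁻¹ = 6 by norm_num]
    linarith
  have hE : (0:ℝ) < Real.exp (-t) := Real.exp_pos _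
  have hcos1 := Real.cos_le_one t
  have hcos2 := Real.neg_one_le_cos t
  have hsin1 := Real.sin_le_one t
  have hsin2 := Real.neg_one_le_sin t
  exact exVecV_entry_pos (Real.exp (-t) * Real.cos t) (Real.exp (-t) * Real.sin t)
    (by nlinarith) (by nlinarith) (by nlinarith) (by nlinarith) j k
end

section
/- Let d be a positive integer and let A be a real d×d matrix. Suppose that the family (exp(tA))_{t ≥ 0} is individually eventually positive, i.e., for every vector u₀ ∈ ℝ^d with all entries ≥ 0 there exists a time t₀ ≥ 0 such that for all t ≥ t₀ all entries of exp(tA)·u₀ are ≥ 0. Then the family is uniformly eventually positive: there exists a single time t₀ ≥ 0 such that for all t ≥ t₀ all entries of the matrix exp(tA) are ≥ 0. -/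
open NormedSpace Matrix

/-- In finite dimensions, individual eventual positivity of the matrix exponential family
implies uniform eventual positivity: if for every entrywise nonnegative `u₀ ∈ ℝ^d` there
is a `t₀ ≥ 0` with `exp (t • A) *ᵥ u₀` entrywise nonnegative for all `t ≥ t₀`, then there
is a single `t₀ ≥ 0` such that all entries of `exp (t • A)` are nonnegative for all
`t ≥ t₀`. -/
theorem uniformly_eventually_positive_of_individually
    (d : ℕ) (hd : 0 < d) (A : Matrix (Fin d) (Fin d) ℝ)
    (hind : ∀ u₀ : Fin d → ℝ, (∀ i, 0 ≤ u₀ i) →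
      ∃ t₀ : ℝ, 0 ≤ t₀ ∧ ∀ t : ℝ, t₀ ≤ t → ∀ i, 0 ≤ (exp (t • A)).mulVec u₀ i) :
    ∃ t₀ : ℝ, 0 ≤ t₀ ∧ ∀ t : ℝ, t₀ ≤ t → ∀ j k : Fin d, 0 ≤ exp (t • A) j k := by
  have h : ∀ k : Fin d, ∃ t₀ : ℝ, 0 ≤ t₀ ∧
      ∀ t : ℝ, t₀ ≤ t → ∀ i, 0 ≤ (exp (t • A)).mulVec (Pi.single k 1) i := fun k =>
    hind (Pi.single k 1) (fun i => by
      classical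
      rcases eq_or_ne i k with rfl | h
      · simp
      · simp [Pi.single_apply, h])
  choose T hT0 hT using h
  haveI : Nonempty (Fin d) := ⟨⟨0, hd⟩⟩
  refine ⟨Finset.univ.sup' Finset.univ_nonempty T,
    le_trans (hT0 (Classical.arbitrary _)) (Finset.le_sup' T (Finset.mem_univ _)), ?_⟩
  intro t ht j k
  have hk := hT k t (le_trans (Finset.le_sup' T (Finset.mem_univ k)) ht) j
  classical
  simpa [mulVec, dotProduct, Pi.single_apply] using hk
end
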